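/- arXiv:2202.09499 — 2 statements merged into one kernel-verified Lean document; each statement's English description precedes it below -/
import Mathlib

section
/- Let A be a unital associative k-algebra and consider the tensor algebra T_A(M) of an A-bimodule M. Then T_A(M)_♮ decomposes as a direct sum ⊕_{n≥0} (M^{⊗_A n})_♮, and the quotient T_A(M)/[T_A(M), T_A(M)] decomposes as ⊕_{n≥0} (M^{⊗_A n})_{♮, C_n}, where the cyclic group C_n acts on (M^{⊗_A n})_♮ by rotating tensor factors. -/
/- STATEMENT 17: For an `A`-bimodule `M`, the naturalization `T_A(M)_♮` of the
tensor algebra `T_A(M) = ⊕_{n≥0} M^{⊗_A n}` decomposes as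
`⊕_{n≥0} (M^{⊗_A n})_♮`, and the cyclic quotient
`T_A(M)_cyc = T_A(M)/[T_A(M), T_A(M)]` decomposes as
`⊕_{n≥0} (M^{⊗_A n})_{♮, C_n}`, where `C_n` acts by rotating tensor factors.

Everything is presented by generators and relations on
`T = ⊕_n P_n`, `P_0 = A`, `P_{n+1} = ⨂[k] (Fin (n+1)), M`:
tensoring over `A` is imposed by the internal balancing relations, `♮` by the
commutators with `A` (weight-`0` commutators and the wrap-around relations),
and `[T,T]` additionally by the transposition relations
`ξ ⊗ η − η ⊗ ξ` for pure tensors `ξ, η` of positive weight.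
`(M^{⊗_A n})_♮` is presented as in Statement 5 by the cyclically-indexed
balancing relations, and `(M^{⊗_A n})_{♮,C_n}` by further quotienting by the
rotation relations. -/

open scoped TensorProduct DirectSum

universe u

variable (k A M : Type u) [CommRing k] [Ring A] [Algebra k A]
  [AddCommGroup M] [Module k M]
  [Module A M] [Module Aᵐᵒᵖ M] [SMulCommClass A Aᵐᵒᵖ M]
  [IsScalarTower k A M] [IsScalarTower k Aᵐᵒᵖ M]

/-- The weight-`n` piece of the tensor algebra before imposing any relations:
`P 0 = A` and `P (n+1)` is the `(n+1)`-fold `k`-tensor power of `M`. -/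
def TAPiece : ℕ → Type u
  | 0 => A
  | n + 1 => ⨂[k] (_ : Fin (n + 1)), M

noncomputable instance TAPiece.addCommGroup : ∀ n, AddCommGroup (TAPiece k A M n)
  | 0 => inferInstanceAs (AddCommGroup A)
  | n + 1 => inferInstanceAs (AddCommGroup (⨂[k] (_ : Fin (n + 1)), M))

noncomputable instance TAPiece.module : ∀ n, Module k (TAPiece k A M n)
  | 0 => inferInstanceAs (Module k A)
  | n + 1 => inferInstanceAs (Module k (⨂[k] (_ : Fin (n + 1)), M))

/-- Commutators `ab − ba` in `A` (the weight-`0` piece). -/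
def commSet : Set A := {z : A | ∃ a b : A, z = a * b - b * a}

/-- The cyclically-indexed balancing relations on the `(n+1)`-fold tensor
power (internal `A`-balancing plus the wrap-around `♮`-commutator), as in
Statement 5. -/
def cycSet (n : ℕ) : Set (⨂[k] (_ : Fin (n + 1)), M) :=
  {z | ∃ (i : Fin (n + 1)) (a : A) (x : Fin (n + 1) → M),
    z = PiTensorProduct.tprod k
          (Function.update x i (MulOpposite.op a • x i)) -
        PiTensorProduct.tprod k
          (Function.update x (i + 1) (a • x (i + 1)))}

/-- The rotation relations `ξ − τ(ξ)` on the `(n+1)`-fold tensor power. -/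
def rotSet (n : ℕ) : Set (⨂[k] (_ : Fin (n + 1)), M) :=
  {z | ∃ x : Fin (n + 1) → M,
    z = PiTensorProduct.tprod k x -
        PiTensorProduct.tprod k (fun j => x (j - 1))}

/-- `(M^{⊗_A (n)})_♮` in each weight (weight `0` being `A/[A,A]`). -/
def natPiece : ℕ → Type u
  | 0 => A ⧸ Submodule.span k (commSet A)
  | n + 1 => (⨂[k] (_ : Fin (n + 1)), M) ⧸ Submodule.span k (cycSet k A M n)

noncomputable instance natPiece.addCommGroup : ∀ n, AddCommGroup (natPiece k A M n)
  | 0 => inferInstanceAs (AddCommGroup (A ⧸ Submodule.span k (commSet A)))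
  | n + 1 => inferInstanceAs (AddCommGroup
      ((⨂[k] (_ : Fin (n + 1)), M) ⧸ Submodule.span k (cycSet k A M n)))

noncomputable instance natPiece.module : ∀ n, Module k (natPiece k A M n)
  | 0 => inferInstanceAs (Module k (A ⧸ Submodule.span k (commSet A)))
  | n + 1 => inferInstanceAs (Module k
      ((⨂[k] (_ : Fin (n + 1)), M) ⧸ Submodule.span k (cycSet k A M n)))

/-- `(M^{⊗_A n})_{♮, C_n}`: additionally quotient by the rotation action. -/
def cycPiece : ℕ → Type u
  | 0 => A ⧸ Submodule.span k (commSet A)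
  | n + 1 => (⨂[k] (_ : Fin (n + 1)), M) ⧸
      Submodule.span k (cycSet k A M n ∪ rotSet k M n)

noncomputable instance cycPiece.addCommGroup : ∀ n, AddCommGroup (cycPiece k A M n)
  | 0 => inferInstanceAs (AddCommGroup (A ⧸ Submodule.span k (commSet A)))
  | n + 1 => inferInstanceAs (AddCommGroup
      ((⨂[k] (_ : Fin (n + 1)), M) ⧸
        Submodule.span k (cycSet k A M n ∪ rotSet k M n)))

noncomputable instance cycPiece.module : ∀ n, Module k (cycPiece k A M n)
  | 0 => inferInstanceAs (Module k (A ⧸ Submodule.span k (commSet A)))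
  | n + 1 => inferInstanceAs (Module k
      ((⨂[k] (_ : Fin (n + 1)), M) ⧸
        Submodule.span k (cycSet k A M n ∪ rotSet k M n)))

/-- The relations defining `T_A(M)` and its naturalization `T_A(M)_♮` inside
`T = ⊕_n P_n`: weight-`0` commutators, internal balancing relations, and the
wrap-around commutators with `A`. -/
def natRels : Set (⨁ n, TAPiece k A M n) :=
  {z | (∃ a b : A,
          z = DirectSum.of (TAPiece k A M) 0 (a * b) -
              DirectSum.of (TAPiece k A M) 0 (b * a)) ∨
       (∃ (n : ℕ) (i : Fin n) (a : A) (x : Fin (n + 1) → M),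
          z = DirectSum.of (TAPiece k A M) (n + 1)
                (PiTensorProduct.tprod k
                  (Function.update x i.castSucc
                    (MulOpposite.op a • x i.castSucc))) -
              DirectSum.of (TAPiece k A M) (n + 1)
                (PiTensorProduct.tprod k
                  (Function.update x i.succ (a • x i.succ)))) ∨
       (∃ (n : ℕ) (a : A) (x : Fin (n + 1) → M),
          z = DirectSum.of (TAPiece k A M) (n + 1)
                (PiTensorProduct.tprod k (Function.update x 0 (a • x 0))) -
              DirectSum.of (TAPiece k A M) (n + 1)
                (PiTensorProduct.tprod k
                  (Function.update x (Fin.last n)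
                    (MulOpposite.op a • x (Fin.last n)))))}

/-- The further transposition relations imposing `T_A(M)_cyc`: for pure
tensors `ξ` (weight `m+1`) and `η` (weight `p+1`),
`ξ ⊗ η − η ⊗ ξ ∈ [T_A(M), T_A(M)]`. -/
def cycRels : Set (⨁ n, TAPiece k A M n) :=
  natRels k A M ∪
    {z | ∃ (m p : ℕ) (x : Fin (m + 1) → M) (y : Fin (p + 1) → M),
      z = DirectSum.of (TAPiece k A M) ((m + 1) + (p + 1))
            (PiTensorProduct.tprod k (Fin.append x y : Fin ((m + 1) + (p + 1)) → M)) -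
          DirectSum.of (TAPiece k A M) ((p + 1) + (m + 1))
            (PiTensorProduct.tprod k (Fin.append y x : Fin ((p + 1) + (m + 1)) → M))}


/-! ### Auxiliary machinery -/

section Aux

open PiTensorProduct
open Fin.NatCast

/-- General principle: the quotient of a direct sum by a "componentwise" submodule is
the direct sum of the componentwise quotients. -/
lemma aux_quot_directSum_equiv {P : ℕ → Type u} [∀ n, AddCommGroup (P n)] [∀ n, Module k (P n)]
    (S : ∀ n, Submodule k (P n)) (W : Submodule k (⨁ n, P n))
    (hW : W = ⨆ n, (S n).map (DirectSum.lof k ℕ P n)) :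
    ∃ e : ((⨁ n, P n) ⧸ W) ≃ₗ[k] ⨁ n, P n ⧸ S n,
      ∀ (n : ℕ) (x : P n),
        e (Submodule.Quotient.mk (DirectSum.of P n x)) =
          DirectSum.of (fun n => P n ⧸ S n) n (Submodule.Quotient.mk x) := by
  classical
  set Q : ℕ → Type u := fun n => P n ⧸ S n with hQ
  have hf0 : W ≤ LinearMap.ker (DirectSum.toModule k ℕ (⨁ n, Q n)
      (fun n => (DirectSum.lof k ℕ Q n).comp (S n).mkQ)) := by
    rw [hW, iSup_le_iff]
    intro m
    rw [Submodule.map_le_iff_le_comap]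
    intro x hx
    simp only [Submodule.mem_comap, LinearMap.mem_ker, DirectSum.toModule_lof,
      LinearMap.comp_apply]
    rw [show (S m).mkQ x = 0 from (Submodule.Quotient.mk_eq_zero _).2 hx]
    simp
  set f : (⨁ n, P n) →ₗ[k] ⨁ n, Q n :=
    DirectSum.toModule k ℕ (⨁ n, Q n) (fun n => (DirectSum.lof k ℕ Q n).comp (S n).mkQ) with hfdef
  set fbar : ((⨁ n, P n) ⧸ W) →ₗ[k] ⨁ n, Q n := W.liftQ f hf0 with hfbar
  have hg0 : ∀ n, S n ≤ LinearMap.ker (W.mkQ.comp (DirectSum.lof k ℕ P n)) := by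
    intro n x hx
    simp only [LinearMap.mem_ker, LinearMap.comp_apply, Submodule.mkQ_apply]
    rw [Submodule.Quotient.mk_eq_zero, hW]
    exact Submodule.mem_iSup_of_mem n ⟨x, hx, rfl⟩
  set g : (⨁ n, Q n) →ₗ[k] ((⨁ n, P n) ⧸ W) :=
    DirectSum.toModule k ℕ _ (fun n => (S n).liftQ (W.mkQ.comp (DirectSum.lof k ℕ P n)) (hg0 n))
    with hgdef
  have hfof : ∀ (n : ℕ) (x : P n),
      f (DirectSum.of P n x) = DirectSum.of Q n (Submodule.Quotient.mk x) := by
    intro n x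
    simp only [hfdef, ← DirectSum.lof_eq_of k, DirectSum.toModule_lof, LinearMap.comp_apply]
    rfl
  have hgof : ∀ (n : ℕ) (x : P n),
      g (DirectSum.of Q n (Submodule.Quotient.mk x)) =
        Submodule.Quotient.mk (DirectSum.of P n x) := by
    intro n x
    simp only [hgdef, ← DirectSum.lof_eq_of k, DirectSum.toModule_lof]
    rfl
  have h1 : g.comp fbar = LinearMap.id := by
    apply Submodule.linearMap_qext
    apply DirectSum.linearMap_ext
    intro n
    ext x
    simp only [LinearMap.comp_apply, Submodule.mkQ_apply, LinearMap.id_apply, hfbar,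
      Submodule.liftQ_apply, ← DirectSum.lof_eq_of k]
    rw [DirectSum.lof_eq_of, hfof, hgof]
  have h2 : fbar.comp g = LinearMap.id := by
    apply DirectSum.linearMap_ext
    intro n
    apply Submodule.linearMap_qext
    ext x
    simp only [LinearMap.comp_apply, Submodule.mkQ_apply, LinearMap.id_apply, hfbar]
    rw [DirectSum.lof_eq_of, hgof]
    simp only [Submodule.liftQ_apply]
    exact DFunLike.congr_fun (hfof n x) _
  refine ⟨LinearEquiv.ofLinear fbar g h2 h1, fun n x => ?_⟩
  simp only [LinearEquiv.ofLinear_apply, hfbar, Submodule.liftQ_apply]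
  exact hfof n x

/-- `DFinsupp.mapRange.linearEquiv` on `DirectSum.of`. -/
lemma aux_mapRange_of {P Q : ℕ → Type u} [∀ n, AddCommGroup (P n)] [∀ n, Module k (P n)]
    [∀ n, AddCommGroup (Q n)] [∀ n, Module k (Q n)]
    (e : ∀ n, P n ≃ₗ[k] Q n) (n : ℕ) (x : P n) :
    (DFinsupp.mapRange.linearEquiv e : (⨁ n, P n) ≃ₗ[k] ⨁ n, Q n)
      (DirectSum.of P n x) = DirectSum.of Q n (e n x) := by
  classical
  simp only [DFinsupp.mapRange.linearEquiv, DirectSum.of]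
  show DFinsupp.mapRange (fun i x => (e i) x) (fun _ => map_zero _) (DFinsupp.single n x) =
    DFinsupp.single n ((e n) x)
  rw [DFinsupp.mapRange_single]

lemma aux_castSucc_add_one {n : ℕ} (i : Fin n) : i.castSucc + 1 = i.succ := by
  ext; simp [Fin.add_def]

lemma aux_last_add_one (n : ℕ) : Fin.last n + 1 = (0 : Fin (n + 1)) := by
  ext; simp [Fin.add_def]

/-- The componentwise relations for `T_A(M)_♮`. -/
noncomputable def Snat : ∀ n, Submodule k (TAPiece k A M n)
  | 0 => Submodule.span k (commSet A)
  | n + 1 => Submodule.span k (cycSet k A M n)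

/-- The componentwise relations for `T_A(M)_cyc`. -/
noncomputable def Scyc : ∀ n, Submodule k (TAPiece k A M n)
  | 0 => Submodule.span k (commSet A)
  | n + 1 => Submodule.span k (cycSet k A M n ∪ rotSet k M n)

/-- Componentwise identification of the quotients with `natPiece`. -/
noncomputable def pieceEquivNat : ∀ n, (TAPiece k A M n ⧸ Snat k A M n) ≃ₗ[k] natPiece k A M n
  | 0 => LinearEquiv.refl _ _
  | _ + 1 => LinearEquiv.refl _ _

/-- Componentwise identification of the quotients with `cycPiece`. -/
noncomputable def pieceEquivCyc : ∀ n, (TAPiece k A M n ⧸ Scyc k A M n) ≃ₗ[k] cycPiece k A M n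
  | 0 => LinearEquiv.refl _ _
  | _ + 1 => LinearEquiv.refl _ _

lemma pieceEquivNat_zero (q : TAPiece k A M 0 ⧸ Snat k A M 0) :
    pieceEquivNat k A M 0 q = q := rfl

lemma pieceEquivNat_succ (n : ℕ) (q : TAPiece k A M (n + 1) ⧸ Snat k A M (n + 1)) :
    pieceEquivNat k A M (n + 1) q = q := rfl

lemma pieceEquivCyc_zero (q : TAPiece k A M 0 ⧸ Scyc k A M 0) :
    pieceEquivCyc k A M 0 q = q := rfl

lemma pieceEquivCyc_succ (n : ℕ) (q : TAPiece k A M (n + 1) ⧸ Scyc k A M (n + 1)) :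
    pieceEquivCyc k A M (n + 1) q = q := rfl

/-- Changing the (equal) weight index under `DirectSum.of` for pure tensors. -/
lemma aux_of_tprod_congr {a b : ℕ} (h : a + 1 = b + 1)
    (x : Fin (a + 1) → M) (y : Fin (b + 1) → M)
    (hxy : ∀ j : Fin (b + 1), y j = x (Fin.cast h.symm j)) :
    DirectSum.of (TAPiece k A M) (a + 1) (PiTensorProduct.tprod k x) =
      DirectSum.of (TAPiece k A M) (b + 1) (PiTensorProduct.tprod k y) := by
  have hab : a = b := by omega
  subst hab
  congr 1
  exact (congrArg (PiTensorProduct.tprod k) (funext fun j => hxy j)).symm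

/-- The basic rotation computation for `Fin.append`. -/
lemma aux_append_swap (m p : ℕ) {α : Type u} (x : Fin (m + 1) → α) (y : Fin (p + 1) → α)
    (j : Fin (m + 1 + p + 1)) :
    Fin.append y x (Fin.cast (by omega : m + 1 + p + 1 = (p + 1) + (m + 1)) j)
      = Fin.append x y (j - ((p + 1 : ℕ) : Fin (m + 1 + p + 1))) := by
  have hs : ((p + 1 : ℕ) : Fin (m + 1 + p + 1)).val = p + 1 := by
    rw [Fin.val_natCast]; exact Nat.mod_eq_of_lt (by omega)
  have hsub : (j - ((p + 1 : ℕ) : Fin (m + 1 + p + 1))).val =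
      if j.val < p + 1 then j.val + (m + 1) else j.val - (p + 1) := by
    rw [Fin.sub_def, hs]
    show (m + 1 + p + 1 - (p + 1) + j.val) % (m + 1 + p + 1) = _
    split_ifs with h
    · rw [show m + 1 + p + 1 - (p + 1) + j.val = j.val + (m + 1) by omega]
      exact Nat.mod_eq_of_lt (by omega)
    · rw [show m + 1 + p + 1 - (p + 1) + j.val = (m + 1 + p + 1) + (j.val - (p + 1)) by omega,
        Nat.add_mod_left]
      exact Nat.mod_eq_of_lt (by omega)
  simp only [Fin.append, Fin.addCases, Fin.cast]
  split_ifs with h1 h2 h2 <;>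
    simp only [eq_rec_constant, hsub, Fin.coe_castLT] at h1 h2 ⊢
  · exfalso; split_ifs at h2 <;> omega
  · refine congrArg y (Fin.ext ?_)
    simp only [Fin.subNat, hsub]
    split_ifs <;> simp <;> omega
  · refine congrArg x (Fin.ext ?_)
    simp only [Fin.castLT, Fin.subNat, hsub]
    split_ifs <;> simp <;> omega
  · exfalso; split_ifs at h2 <;> omega

/-- Telescoping: the `s`-fold rotation relation lies in the span of the basic
rotation relations. -/
lemma aux_rot_iterate_mem (n : ℕ) (x : Fin (n + 1) → M) (s : ℕ) :
    (PiTensorProduct.tprod k x -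
      PiTensorProduct.tprod k (fun j => x (j - ((s : ℕ) : Fin (n + 1)))))
      ∈ Submodule.span k (rotSet k M n) := by
  induction s with
  | zero => simp
  | succ s ih =>
      have h1 : (PiTensorProduct.tprod k (fun j => x (j - ((s : ℕ) : Fin (n + 1)))) -
          PiTensorProduct.tprod k
            (fun j : Fin (n + 1) => x ((j - 1) - ((s : ℕ) : Fin (n + 1)))))
          ∈ Submodule.span k (rotSet k M n) :=
        Submodule.subset_span ⟨fun j => x (j - ((s : ℕ) : Fin (n + 1))), rfl⟩
      have h2 : (fun j : Fin (n + 1) => x ((j - 1) - ((s : ℕ) : Fin (n + 1)))) =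
          fun j : Fin (n + 1) => x (j - ((s + 1 : ℕ) : Fin (n + 1))) := by
        funext j; congr 1; rw [sub_sub, add_comm (1 : Fin (n + 1))]; congr 1; exact (Nat.cast_succ s).symm
      rw [h2] at h1
      simpa using Submodule.add_mem _ ih h1

end Aux


section Spans

open PiTensorProduct
open Fin.NatCast

/-- The transposition relations lie in the componentwise span generated by rotations. -/
lemma aux_trans_mem (m p : ℕ) (x : Fin (m + 1) → M) (y : Fin (p + 1) → M) :
    (DirectSum.of (TAPiece k A M) ((m + 1) + (p + 1))
        (PiTensorProduct.tprod k (Fin.append (m := m + 1) (n := p + 1) x y)) -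
      DirectSum.of (TAPiece k A M) ((p + 1) + (m + 1))
        (PiTensorProduct.tprod k (Fin.append (m := p + 1) (n := m + 1) y x)))
      ∈ ⨆ n, (Scyc k A M n).map (DirectSum.lof k ℕ (TAPiece k A M) n) := by
  have h : (m + 1 + p + 1 : ℕ) = (p + 1) + (m + 1) := by omega
  set u : Fin (m + 1 + p + 1) → M :=
    fun j => Fin.append (m := m + 1) (n := p + 1) x y j with hu
  have key : DirectSum.of (TAPiece k A M) ((p + 1) + (m + 1))
      (PiTensorProduct.tprod k (Fin.append (m := p + 1) (n := m + 1) y x)) =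
    DirectSum.of (TAPiece k A M) (m + 1 + p + 1)
      (PiTensorProduct.tprod k (fun j : Fin (m + 1 + p + 1) =>
        u (j - ((p + 1 : ℕ) : Fin (m + 1 + p + 1))))) := by
    refine (aux_of_tprod_congr k A M h
      (fun j : Fin (m + 1 + p + 1) => u (j - ((p + 1 : ℕ) : Fin (m + 1 + p + 1))))
      (Fin.append (m := p + 1) (n := m + 1) y x) (fun j => ?_)).symm
    exact aux_append_swap (m := m) (p := p) x y (Fin.cast h.symm j)
  show (DirectSum.of (TAPiece k A M) (m + 1 + p + 1) (PiTensorProduct.tprod k u) -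
      DirectSum.of (TAPiece k A M) ((p + 1) + (m + 1))
        (PiTensorProduct.tprod k (Fin.append (m := p + 1) (n := m + 1) y x))) ∈ _
  rw [key]
  refine Submodule.mem_iSup_of_mem (m + 1 + p + 1)
    ⟨PiTensorProduct.tprod k u -
      PiTensorProduct.tprod k (fun j : Fin (m + 1 + p + 1) =>
        u (j - ((p + 1 : ℕ) : Fin (m + 1 + p + 1)))), ?_,
      by exact map_sub (DirectSum.lof k ℕ (TAPiece k A M) _) _ _⟩
  exact Submodule.span_mono Set.subset_union_right
    (aux_rot_iterate_mem k M (m + 1 + p) u (p + 1))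

/-- The rotation relations lie (in weight at least `2`) in the span of the
transposition relations. -/
lemma aux_rot_mem (m : ℕ) (x : Fin (m + 1 + 1) → M) :
    (DirectSum.of (TAPiece k A M) (m + 1 + 1) (PiTensorProduct.tprod k x) -
      DirectSum.of (TAPiece k A M) (m + 1 + 1)
        (PiTensorProduct.tprod k (fun j : Fin (m + 1 + 1) => x (j - 1))))
      ∈ Submodule.span k (cycRels k A M) := by
  set x' : Fin (m + 1) → M := fun i => x i.castSucc with hx'
  set y' : Fin (0 + 1) → M := fun _ => x (Fin.last (m + 1)) with hy'
  set u : Fin (m + 1 + 1) → M :=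
    fun j => Fin.append (m := m + 1) (n := 0 + 1) x' y' j with hu
  have hxe : u = x := by
    funext j
    induction j using Fin.lastCases with
    | last =>
        show Fin.append (m := m + 1) (n := 0 + 1) x' y'
          (Fin.natAdd (m + 1) (0 : Fin (0 + 1))) = x (Fin.last (m + 1))
        rw [Fin.append_right]
    | cast i =>
        show Fin.append (m := m + 1) (n := 0 + 1) x' y'
          (Fin.castAdd (0 + 1) i) = x i.castSucc
        rw [Fin.append_left]
  have h : (m + 1 + 1 : ℕ) = (0 + 1) + (m + 1) := by omega
  have key : DirectSum.of (TAPiece k A M) ((0 + 1) + (m + 1))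
      (PiTensorProduct.tprod k (Fin.append (m := 0 + 1) (n := m + 1) y' x')) =
    DirectSum.of (TAPiece k A M) (m + 1 + 1)
      (PiTensorProduct.tprod k (fun j : Fin (m + 1 + 1) =>
        u (j - ((0 + 1 : ℕ) : Fin (m + 1 + 1))))) := by
    refine (aux_of_tprod_congr k A M h
      (fun j : Fin (m + 1 + 1) => u (j - ((0 + 1 : ℕ) : Fin (m + 1 + 1))))
      (Fin.append (m := 0 + 1) (n := m + 1) y' x') (fun j => ?_)).symm
    exact aux_append_swap (m := m) (p := 0) x' y' (Fin.cast h.symm j)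
  have hz : (DirectSum.of (TAPiece k A M) (m + 1 + 1) (PiTensorProduct.tprod k u) -
      DirectSum.of (TAPiece k A M) ((0 + 1) + (m + 1))
        (PiTensorProduct.tprod k (Fin.append (m := 0 + 1) (n := m + 1) y' x')))
      ∈ Submodule.span k (cycRels k A M) :=
    Submodule.subset_span (Or.inr ⟨m, 0, x', y', rfl⟩)
  rw [key] at hz
  have harg : (fun j : Fin (m + 1 + 1) => u (j - ((0 + 1 : ℕ) : Fin (m + 1 + 1)))) =
      fun j : Fin (m + 1 + 1) => x (j - 1) := by
    funext j
    rw [hxe]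
    norm_num
  rw [harg, hxe] at hz
  exact hz

lemma aux_lof_sub0 (c d : A) :
    DirectSum.lof k ℕ (TAPiece k A M) 0 (c - d) =
      DirectSum.of (TAPiece k A M) 0 c - DirectSum.of (TAPiece k A M) 0 d :=
  map_sub _ _ _

lemma aux_lof_sub (n : ℕ) (c d : ⨂[k] (_ : Fin (n + 1)), M) :
    DirectSum.lof k ℕ (TAPiece k A M) (n + 1) (c - d) =
      DirectSum.of (TAPiece k A M) (n + 1) c - DirectSum.of (TAPiece k A M) (n + 1) d :=
  map_sub _ _ _

/-- Componentwise description of the span of the `♮`-relations. -/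
lemma span_natRels_eq :
    Submodule.span k (natRels k A M) =
      ⨆ n, (Snat k A M n).map (DirectSum.lof k ℕ (TAPiece k A M) n) := by
  apply le_antisymm
  · rw [Submodule.span_le]
    rintro z (⟨a, b, rfl⟩ | ⟨n, i, a, x, rfl⟩ | ⟨n, a, x, rfl⟩)
    · exact Submodule.mem_iSup_of_mem 0 ⟨a * b - b * a,
        Submodule.subset_span ⟨a, b, rfl⟩,
        by exact map_sub (DirectSum.lof k ℕ (TAPiece k A M) _) _ _⟩
    · exact Submodule.mem_iSup_of_mem (n + 1)
        ⟨PiTensorProduct.tprod k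
            (Function.update x i.castSucc (MulOpposite.op a • x i.castSucc)) -
          PiTensorProduct.tprod k (Function.update x i.succ (a • x i.succ)),
        Submodule.subset_span ⟨i.castSucc, a, x, by rw [aux_castSucc_add_one]⟩,
        by exact map_sub (DirectSum.lof k ℕ (TAPiece k A M) _) _ _⟩
    · refine Submodule.mem_iSup_of_mem (n + 1)
        ⟨PiTensorProduct.tprod k (Function.update x 0 (a • x 0)) -
          PiTensorProduct.tprod k
            (Function.update x (Fin.last n) (MulOpposite.op a • x (Fin.last n))), ?_,
        by exact map_sub (DirectSum.lof k ℕ (TAPiece k A M) _) _ _⟩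
      have hmem : (PiTensorProduct.tprod k
            (Function.update x (Fin.last n) (MulOpposite.op a • x (Fin.last n))) -
          PiTensorProduct.tprod k (Function.update x 0 (a • x 0)))
          ∈ Snat k A M (n + 1) :=
        Submodule.subset_span ⟨Fin.last n, a, x, by rw [aux_last_add_one]⟩
      exact (by have h' := Submodule.neg_mem _ hmem; rw [neg_sub] at h'; exact h')
  · refine iSup_le fun n => ?_
    rw [Submodule.map_le_iff_le_comap]
    match n with
    | 0 =>
      refine Submodule.span_le.mpr ?_
      rintro s ⟨a, b, rfl⟩
      show DirectSum.lof k ℕ (TAPiece k A M) 0 _ ∈ Submodule.span k (natRels k A M)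
      rw [aux_lof_sub0]
      exact Submodule.subset_span (Or.inl ⟨a, b, rfl⟩)
    | (n + 1) =>
      refine Submodule.span_le.mpr ?_
      rintro s ⟨i, a, x, rfl⟩
      show DirectSum.lof k ℕ (TAPiece k A M) (n + 1) _ ∈ Submodule.span k (natRels k A M)
      rw [aux_lof_sub]
      induction i using Fin.lastCases with
      | last =>
          rw [aux_last_add_one]
          have hmem : (DirectSum.of (TAPiece k A M) (n + 1)
              (PiTensorProduct.tprod k (Function.update x 0 (a • x 0))) -
              DirectSum.of (TAPiece k A M) (n + 1)
                (PiTensorProduct.tprod k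
                  (Function.update x (Fin.last n) (MulOpposite.op a • x (Fin.last n)))))
              ∈ Submodule.span k (natRels k A M) :=
            Submodule.subset_span (Or.inr (Or.inr ⟨n, a, x, rfl⟩))
          simpa using Submodule.neg_mem _ hmem
      | cast j =>
          rw [aux_castSucc_add_one]
          exact Submodule.subset_span (Or.inr (Or.inl ⟨n, j, a, x, rfl⟩))

/-- Componentwise description of the span of the cyclic relations. -/
lemma span_cycRels_eq :
    Submodule.span k (cycRels k A M) =
      ⨆ n, (Scyc k A M n).map (DirectSum.lof k ℕ (TAPiece k A M) n) := by
  apply le_antisymm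
  · rw [Submodule.span_le]
    rintro z (hz | ⟨m, p, x, y, rfl⟩)
    · rcases hz with ⟨a, b, rfl⟩ | ⟨n, i, a, x, rfl⟩ | ⟨n, a, x, rfl⟩
      · exact Submodule.mem_iSup_of_mem 0 ⟨a * b - b * a,
          Submodule.subset_span ⟨a, b, rfl⟩,
          by exact map_sub (DirectSum.lof k ℕ (TAPiece k A M) _) _ _⟩
      · exact Submodule.mem_iSup_of_mem (n + 1)
          ⟨PiTensorProduct.tprod k
              (Function.update x i.castSucc (MulOpposite.op a • x i.castSucc)) -
            PiTensorProduct.tprod k (Function.update x i.succ (a • x i.succ)),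
          Submodule.subset_span (Set.mem_union_left _
            ⟨i.castSucc, a, x, by rw [aux_castSucc_add_one]⟩),
          by exact map_sub (DirectSum.lof k ℕ (TAPiece k A M) _) _ _⟩
      · refine Submodule.mem_iSup_of_mem (n + 1)
          ⟨PiTensorProduct.tprod k (Function.update x 0 (a • x 0)) -
            PiTensorProduct.tprod k
              (Function.update x (Fin.last n) (MulOpposite.op a • x (Fin.last n))), ?_,
          by exact map_sub (DirectSum.lof k ℕ (TAPiece k A M) _) _ _⟩
        have hmem : (PiTensorProduct.tprod k
              (Function.update x (Fin.last n) (MulOpposite.op a • x (Fin.last n))) -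
            PiTensorProduct.tprod k (Function.update x 0 (a • x 0)))
            ∈ Scyc k A M (n + 1) :=
          Submodule.subset_span (Set.mem_union_left _
            ⟨Fin.last n, a, x, by rw [aux_last_add_one]⟩)
        exact (by have h' := Submodule.neg_mem _ hmem; rw [neg_sub] at h'; exact h')
    · exact aux_trans_mem k A M m p x y
  · refine iSup_le fun n => ?_
    rw [Submodule.map_le_iff_le_comap]
    match n with
    | 0 =>
      refine Submodule.span_le.mpr ?_
      rintro s ⟨a, b, rfl⟩
      show DirectSum.lof k ℕ (TAPiece k A M) 0 _ ∈ Submodule.span k (cycRels k A M)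
      rw [aux_lof_sub0]
      exact Submodule.subset_span (Or.inl (Or.inl ⟨a, b, rfl⟩))
    | (n + 1) =>
      refine Submodule.span_le.mpr ?_
      rintro s (⟨i, a, x, rfl⟩ | ⟨x, rfl⟩)
      · show DirectSum.lof k ℕ (TAPiece k A M) (n + 1) _ ∈ Submodule.span k (cycRels k A M)
        rw [aux_lof_sub]
        induction i using Fin.lastCases with
        | last =>
            rw [aux_last_add_one]
            have hmem : (DirectSum.of (TAPiece k A M) (n + 1)
                (PiTensorProduct.tprod k (Function.update x 0 (a • x 0))) -
                DirectSum.of (TAPiece k A M) (n + 1)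
                  (PiTensorProduct.tprod k
                    (Function.update x (Fin.last n) (MulOpposite.op a • x (Fin.last n)))))
                ∈ Submodule.span k (cycRels k A M) :=
              Submodule.subset_span (Or.inl (Or.inr (Or.inr ⟨n, a, x, rfl⟩)))
            simpa using Submodule.neg_mem _ hmem
        | cast j =>
            rw [aux_castSucc_add_one]
            exact Submodule.subset_span (Or.inl (Or.inr (Or.inl ⟨n, j, a, x, rfl⟩)))
      · show DirectSum.lof k ℕ (TAPiece k A M) (n + 1) _ ∈ Submodule.span k (cycRels k A M)
        rw [aux_lof_sub]
        match n, x with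
        | 0, x =>
            have hx : (fun j : Fin 1 => x (j - 1)) = x := by
              funext j
              congr 1
              refine Fin.ext ?_
              have h1 := (j - 1).isLt
              have h2 := j.isLt
              omega
            rw [hx, sub_self]
            exact Submodule.zero_mem _
        | (m + 1), x => exact aux_rot_mem k A M m x

end Spans

theorem tensor_algebra_naturalization_decomposes :
    -- T_A(M)_♮ ≅ ⊕_{n≥0} (M^{⊗_A n})_♮
    (∃ e : ((⨁ n, TAPiece k A M n) ⧸ Submodule.span k (natRels k A M))
          ≃ₗ[k] ⨁ n, natPiece k A M n,
      (∀ a : A,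
        e (Submodule.Quotient.mk (DirectSum.of (TAPiece k A M) 0 a)) =
          DirectSum.of (natPiece k A M) 0 (Submodule.Quotient.mk a)) ∧
      (∀ (n : ℕ) (x : ⨂[k] (_ : Fin (n + 1)), M),
        e (Submodule.Quotient.mk (DirectSum.of (TAPiece k A M) (n + 1) x)) =
          DirectSum.of (natPiece k A M) (n + 1) (Submodule.Quotient.mk x))) ∧
    -- T_A(M)_cyc ≅ ⊕_{n≥0} (M^{⊗_A n})_{♮,C_n}
    (∃ e : ((⨁ n, TAPiece k A M n) ⧸ Submodule.span k (cycRels k A M))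
          ≃ₗ[k] ⨁ n, cycPiece k A M n,
      (∀ a : A,
        e (Submodule.Quotient.mk (DirectSum.of (TAPiece k A M) 0 a)) =
          DirectSum.of (cycPiece k A M) 0 (Submodule.Quotient.mk a)) ∧
      (∀ (n : ℕ) (x : ⨂[k] (_ : Fin (n + 1)), M),
        e (Submodule.Quotient.mk (DirectSum.of (TAPiece k A M) (n + 1) x)) =
          DirectSum.of (cycPiece k A M) (n + 1) (Submodule.Quotient.mk x))) := by
  constructor
  · obtain ⟨e0, he0⟩ := aux_quot_directSum_equiv k (Snat k A M)
      (Submodule.span k (natRels k A M)) (span_natRels_eq k A M)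
    refine ⟨e0.trans (DFinsupp.mapRange.linearEquiv (pieceEquivNat k A M)), ?_, ?_⟩
    · intro a
      show (DFinsupp.mapRange.linearEquiv (pieceEquivNat k A M)) (e0 _) = _
      rw [he0 0 a, aux_mapRange_of, pieceEquivNat_zero]
      rfl
    · intro n x
      show (DFinsupp.mapRange.linearEquiv (pieceEquivNat k A M)) (e0 _) = _
      rw [he0 (n + 1) x, aux_mapRange_of, pieceEquivNat_succ]
      rfl
  · obtain ⟨e0, he0⟩ := aux_quot_directSum_equiv k (Scyc k A M)
      (Submodule.span k (cycRels k A M)) (span_cycRels_eq k A M)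
    refine ⟨e0.trans (DFinsupp.mapRange.linearEquiv (pieceEquivCyc k A M)), ?_, ?_⟩
    · intro a
      show (DFinsupp.mapRange.linearEquiv (pieceEquivCyc k A M)) (e0 _) = _
      rw [he0 0 a, aux_mapRange_of, pieceEquivCyc_zero]
      rfl
    · intro n x
      show (DFinsupp.mapRange.linearEquiv (pieceEquivCyc k A M)) (e0 _) = _
      rw [he0 (n + 1) x, aux_mapRange_of, pieceEquivCyc_succ]
      rfl
end

section
/- Let A be a dg algebra over a commutative ring k, and let sD̃ be the unique graded derivation of degree +1 on the tensor dg-category T_A(S(A)) (where S(A) = cone(Ω¹(A) → A⊗A)) determined by sD̃(f) = sDf for f ∈ A, sD̃(sDf) = 0, and sD̃(E) = 0 for the canonical element E = 1⊗1 ∈ A⊗A ⊂ S(A). Then the graded commutator of sD̃ with the intrinsic differential d satisfies [sD̃, d](ξ) = ξ·E − E·ξ for every ξ, i.e., [sD̃, d] = [−, E]. -/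
/- STATEMENT 19: Let `A` be a dg algebra over `k`, and let `T = T_A(S(A))` be
the tensor dg algebra of the bimodule `S(A) = cone(Ω¹(A) → A ⊗ A)`, so that
`T` is generated by the elements `ι(f)` (`f ∈ A`), the shifted differentials
`SD(f) = sDf`, and the canonical element `E = 1⊗1`, subject to the Leibniz
relation for `SD`, with intrinsic differential `d` determined by
`d(ι f) = ι(df)`, `d(sDf) = fE − Ef − sD(df)`, `d(E) = 0`.
Let `sD̃` be the unique graded derivation of degree `+1` on `T` with
`sD̃(ι f) = sDf`, `sD̃(sDf) = 0`, `sD̃(E) = 0`.  Then the graded commutator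
satisfies `[sD̃, d](ξ) = ξ·E − E·ξ` for every `ξ ∈ T`, i.e. `[sD̃, d] = [−,E]`.

The dg algebras are encoded as ℤ-graded `k`-algebras (`GradedRing`) with
differentials and graded derivations given as `k`-linear endomorphisms
satisfying the graded Leibniz rule on homogeneous elements. -/

theorem commutator_of_sD_tilde_with_d_is_bracket_with_E
    (k A T : Type*) [CommRing k] [Ring A] [Algebra k A] [Ring T] [Algebra k T]
    (𝒜 : ℤ → Submodule k A) [GradedRing 𝒜]
    (𝒯 : ℤ → Submodule k T) [GradedRing 𝒯]
    -- the intrinsic differential of A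
    (dA : A →ₗ[k] A)
    (hdAdeg : ∀ (i : ℤ) (x : A), x ∈ 𝒜 i → dA x ∈ 𝒜 (i - 1))
    (hdA2 : dA ∘ₗ dA = 0)
    (hdALeib : ∀ (i : ℤ) (x y : A), x ∈ 𝒜 i →
      dA (x * y) = dA x * y + ((((-1 : ℤˣ) ^ i : ℤˣ) : ℤ)) • (x * dA y))
    -- the generators of T = T_A(S(A))
    (ι : A →ₐ[k] T)
    (hιdeg : ∀ (i : ℤ) (x : A), x ∈ 𝒜 i → ι x ∈ 𝒯 i)
    (SD : A →ₗ[k] T)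
    (hSDdeg : ∀ (i : ℤ) (x : A), x ∈ 𝒜 i → SD x ∈ 𝒯 (i + 1))
    (hSDLeib : ∀ (i : ℤ) (x y : A), x ∈ 𝒜 i →
      SD (x * y) = SD x * ι y + ((((-1 : ℤˣ) ^ i : ℤˣ) : ℤ)) • (ι x * SD y))
    (E : T) (hEdeg : E ∈ 𝒯 0)
    (hgen : Algebra.adjoin k
      (Set.range ι ∪ Set.range SD ∪ {E}) = ⊤)
    -- the intrinsic differential d of T
    (d : T →ₗ[k] T)
    (hddeg : ∀ (i : ℤ) (ξ : T), ξ ∈ 𝒯 i → d ξ ∈ 𝒯 (i - 1))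
    (hd2 : d ∘ₗ d = 0)
    (hdLeib : ∀ (i : ℤ) (ξ η : T), ξ ∈ 𝒯 i →
      d (ξ * η) = d ξ * η + ((((-1 : ℤˣ) ^ i : ℤˣ) : ℤ)) • (ξ * d η))
    (hdι : ∀ f : A, d (ι f) = ι (dA f))
    (hdSD : ∀ f : A, d (SD f) = ι f * E - E * ι f - SD (dA f))
    (hdE : d E = 0)
    -- the graded derivation sD̃ of degree +1
    (δ : T →ₗ[k] T)
    (hδdeg : ∀ (i : ℤ) (ξ : T), ξ ∈ 𝒯 i → δ ξ ∈ 𝒯 (i + 1))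
    (hδLeib : ∀ (i : ℤ) (ξ η : T), ξ ∈ 𝒯 i →
      δ (ξ * η) = δ ξ * η + ((((-1 : ℤˣ) ^ i : ℤˣ) : ℤ)) • (ξ * δ η))
    (hδι : ∀ f : A, δ (ι f) = SD f)
    (hδSD : ∀ f : A, δ (SD f) = 0)
    (hδE : δ E = 0) :
    -- conclusion: [sD̃, d] = [−, E]
    ∀ ξ : T, δ (d ξ) + d (δ ξ) = ξ * E - E * ξ := by
  classical
  -- sign arithmetic
  have he2 : ∀ i : ℤ, (((-1 : ℤˣ) ^ i : ℤˣ) : ℤ) * (((-1 : ℤˣ) ^ i : ℤˣ) : ℤ) = 1 := by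
    intro i
    rw [← Units.val_mul, ← mul_zpow]
    norm_num
  have hm1 : ∀ i : ℤ, (((-1 : ℤˣ) ^ (i - 1) : ℤˣ) : ℤ) = -(((-1 : ℤˣ) ^ i : ℤˣ) : ℤ) := by
    intro i
    rw [zpow_sub_one]
    simp
  have hp1 : ∀ i : ℤ, (((-1 : ℤˣ) ^ (i + 1) : ℤˣ) : ℤ) = -(((-1 : ℤˣ) ^ i : ℤˣ) : ℤ) := by
    intro i
    rw [zpow_add_one]
    simp
  -- the "defect" linear map
  set L : T →ₗ[k] T :=
    δ ∘ₗ d + d ∘ₗ δ + LinearMap.mulLeft k E - LinearMap.mulRight k E with hLdef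
  have hLapp : ∀ ξ : T, L ξ = δ (d ξ) + d (δ ξ) + E * ξ - ξ * E := by
    intro ξ
    simp [hLdef, LinearMap.mulLeft, LinearMap.mulRight]
  have hLP : ∀ ξ : T, L ξ = 0 ↔ δ (d ξ) + d (δ ξ) = ξ * E - E * ξ := by
    intro ξ
    rw [hLapp, sub_eq_zero]
    constructor
    · intro h
      rw [eq_sub_iff_add_eq, ← h]
    · intro h
      rw [h]
      abel
  -- L preserves degree
  have hLdeg : ∀ (j : ℤ) (x : T), x ∈ 𝒯 j → L x ∈ 𝒯 j := by
    intro j x hx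
    rw [hLapp]
    have h1 : δ (d x) ∈ 𝒯 j := by
      have := hδdeg (j - 1) (d x) (hddeg j x hx)
      rwa [sub_add_cancel] at this
    have h2 : d (δ x) ∈ 𝒯 j := by
      have := hddeg (j + 1) (δ x) (hδdeg j x hx)
      rwa [add_sub_cancel_right] at this
    have h3 : E * x ∈ 𝒯 j := by
      have := SetLike.mul_mem_graded hEdeg hx
      rwa [zero_add] at this
    have h4 : x * E ∈ 𝒯 j := by
      have := SetLike.mul_mem_graded hx hEdeg
      rwa [add_zero] at this
    exact sub_mem (add_mem (add_mem h1 h2) h3) h4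
  -- L commutes with homogeneous components
  have hcomp : ∀ (ξ : T) (j : ℤ),
      (DirectSum.decompose 𝒯 (L ξ) j : T) = L (DirectSum.decompose 𝒯 ξ j : T) := by
    intro ξ
    induction ξ using DirectSum.Decomposition.inductionOn 𝒯 with
    | zero => simp
    | homogeneous x =>
        rename_i i
        intro j
        rcases eq_or_ne i j with rfl | hij
        · rw [DirectSum.decompose_of_mem_same 𝒯 (x := (x : T)) x.2,
            DirectSum.decompose_of_mem_same 𝒯 (hLdeg i (x : T) x.2)]
        · rw [DirectSum.decompose_of_mem_ne 𝒯 (x := (x : T)) x.2 hij,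
            DirectSum.decompose_of_mem_ne 𝒯 (hLdeg i (x : T) x.2) hij, map_zero]
    | add m m' hm hm' =>
        intro j
        rw [map_add, DirectSum.decompose_add, DirectSum.add_apply, Submodule.coe_add,
          DirectSum.decompose_add, DirectSum.add_apply, Submodule.coe_add, map_add,
          hm j, hm' j]
  -- the Leibniz-type key identity for products with a homogeneous left factor
  have key : ∀ (i : ℤ) (x η : T), x ∈ 𝒯 i →
      δ (d (x * η)) + d (δ (x * η))
        = (δ (d x) + d (δ x)) * η + x * (δ (d η) + d (δ η)) := by
    intro i x η hx
    have hdx := hddeg i x hx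
    have hδx := hδdeg i x hx
    rw [hdLeib i x η hx, hδLeib i x η hx, map_add, map_add, map_zsmul, map_zsmul,
      hδLeib (i - 1) (d x) η hdx, hdLeib (i + 1) (δ x) η hδx,
      hδLeib i x (d η) hx, hdLeib i x (δ η) hx, hm1 i, hp1 i]
    simp only [smul_add, smul_smul, he2 i, one_smul, neg_smul, add_mul, mul_add]
    abel
  -- multiplicative closure for a homogeneous left factor
  have hmulhom : ∀ (i : ℤ) (x η : T), x ∈ 𝒯 i → L x = 0 → L η = 0 → L (x * η) = 0 := by
    intro i x η hx hLx hLη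
    rw [hLP] at hLx hLη ⊢
    rw [key i x η hx, hLx, hLη]
    noncomm_ring
  -- multiplicative closure in general
  have hmul : ∀ x η : T, L x = 0 → L η = 0 → L (x * η) = 0 := by
    intro x η hLx hLη
    conv_lhs => rw [← DirectSum.sum_support_decompose 𝒯 x, Finset.sum_mul, map_sum]
    apply Finset.sum_eq_zero
    intro j _
    refine hmulhom j _ η (SetLike.coe_mem _) ?_ hLη
    rw [← hcomp, hLx]
    simp
  -- generator cases
  have hPι : ∀ f : A, L (ι f) = 0 := by
    intro f
    rw [hLP, hdι f, hδι (dA f), hδι f, hdSD f]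
    abel
  have hPSDh : ∀ (i : ℤ) (f : A), f ∈ 𝒜 i → L (SD f) = 0 := by
    intro i f hf
    rw [hLP, hdSD f, hδSD f, map_zero, map_sub, map_sub,
      hδLeib i (ι f) E (hιdeg i f hf), hδLeib 0 E (ι f) hEdeg, hδSD (dA f),
      hδE, hδι f]
    simp only [zpow_zero, Units.val_one, one_smul, mul_zero, smul_zero, zero_mul, add_zero,
      zero_add, sub_zero]
  have hPSD : ∀ f : A, L (SD f) = 0 := by
    intro f
    induction f using DirectSum.Decomposition.inductionOn 𝒜 with
    | zero => simp
    | homogeneous x =>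
        rename_i i
        exact hPSDh i (x : A) x.2
    | add a b ha hb => rw [map_add, map_add, ha, hb, add_zero]
  have hPE : L E = 0 := by
    rw [hLP, hdE, hδE, map_zero, map_zero]
    simp
  -- conclusion by induction on the generating set
  intro ξ
  rw [← hLP]
  have hξ : ξ ∈ Algebra.adjoin k (Set.range ι ∪ Set.range SD ∪ {E}) := by
    rw [hgen]; trivial
  induction hξ using Algebra.adjoin_induction with
  | mem x hx =>
      rcases hx with (⟨f, rfl⟩ | ⟨f, rfl⟩) | rfl
      · exact hPι f
      · exact hPSD f
      · exact hPE
  | algebraMap r =>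
      rw [show (algebraMap k T) r = ι (algebraMap k A r) from (ι.commutes r).symm]
      exact hPι _
  | add x y hx hy hLx hLy => rw [map_add, hLx, hLy, add_zero]
  | mul x y hx hy hLx hLy => exact hmul x y hLx hLy
end
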